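/- Let f = sec(2x), g = 2 tan(2x), D = d/dx. For all n ≥ 1, D^n(g) = 2^{n+1} Σ_{k=0}^{⌊(n−1)/2⌋} a(n,k) f^{2k+2} g^{n−1−2k}, where a(n,k) satisfy a(1,0)=1, a(1,k)=0 for k≥1, and a(n,k) = (k+1)a(n−1,k) + (2n−4k)a(n−1,k−1). -/

import Mathlib

open Finset

lemma hasDerivAt_T' {x : ℝ} (hx : Real.cos (2*x) ≠ 0) :
    HasDerivAt (fun y : ℝ => 2*Real.tan (2*y)) (4 * ((Real.cos (2*x))⁻¹)^2) x := by
  have h2 : HasDerivAt (fun y : ℝ => 2*y) 2 x := by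
    simpa using (hasDerivAt_id x).const_mul 2
  have h := ((Real.hasDerivAt_tan hx).comp x h2).const_mul 2
  refine h.congr_deriv ?_
  field_simp
  ring

lemma hasDerivAt_S' {x : ℝ} (hx : Real.cos (2*x) ≠ 0) :
    HasDerivAt (fun y : ℝ => (Real.cos (2*y))⁻¹)
      ((Real.cos (2*x))⁻¹ * (2*Real.tan (2*x))) x := by
  have h2 : HasDerivAt (fun y : ℝ => 2*y) 2 x := by
    simpa using (hasDerivAt_id x).const_mul 2
  have hc : HasDerivAt (fun y : ℝ => Real.cos (2*y)) (-Real.sin (2*x) * 2) x :=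
    (Real.hasDerivAt_cos (2*x)).comp x h2
  have h := hc.inv hx
  refine h.congr_deriv ?_
  rw [Real.tan_eq_sin_div_cos]
  field_simp

/-- With `f = sec(2x)`, `g = 2 tan(2x)` and `D = d/dx`: for all `n ≥ 1` and all `x`
where `cos(2x) ≠ 0`, `D^n(g) = 2^{n+1} Σ_{k=0}^{⌊(n−1)/2⌋} a(n,k) f^{2k+2} g^{n−1−2k}`,
where `a(1,0)=1`, `a(1,k)=0` for `k ≥ 1` (and for `k < 0`), and
`a(n,k) = (k+1)a(n−1,k) + (2n−4k)a(n−1,k−1)` for `n ≥ 2`. -/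
theorem iterated_deriv_tan_gamma (a : ℕ → ℤ → ℝ)
    (ha1 : a 1 0 = 1) (ha1' : ∀ k : ℤ, k ≠ 0 → a 1 k = 0)
    (harec : ∀ n : ℕ, 2 ≤ n → ∀ k : ℤ,
      a n k = (k + 1) * a (n - 1) k + (2 * n - 4 * k) * a (n - 1) (k - 1)) :
    ∀ n : ℕ, 1 ≤ n → ∀ x : ℝ, Real.cos (2 * x) ≠ 0 →
      deriv^[n] (fun x : ℝ => 2 * Real.tan (2 * x)) x =
        2 ^ (n + 1) * ∑ k ∈ Finset.range ((n - 1) / 2 + 1),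
          a n k * ((Real.cos (2 * x))⁻¹) ^ (2 * k + 2) *
            (2 * Real.tan (2 * x)) ^ (n - 1 - 2 * k) := by
  -- vanishing of a outside the triangle
  have hvan : ∀ n : ℕ, 1 ≤ n → ∀ k : ℤ, (k < 0 ∨ (n:ℤ) ≤ 2*k) → a n k = 0 := by
    intro n hn
    induction n, hn using Nat.le_induction with
    | base =>
      intro k hk
      apply ha1'
      omega
    | succ n hn ih =>
      intro k hk
      rw [harec (n+1) (by omega) k]
      simp only [Nat.add_sub_cancel]
      rcases hk with hk | hk
      · rw [ih k (Or.inl hk), ih (k-1) (Or.inl (by omega))]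
        ring
      · by_cases h2 : 2*k = (n:ℤ) + 1
        · have h2' : (2:ℝ)*(k:ℝ) = (n:ℝ)+1 := by exact_mod_cast h2
          rw [ih k (Or.inr (by omega))]
          push_cast
          linear_combination (-2*a n (k-1)) * h2'
        · rw [ih k (Or.inr (by omega)), ih (k-1) (Or.inr (by omega))]
          ring
  have hopen : IsOpen {y : ℝ | Real.cos (2*y) ≠ 0} := by
    have : Continuous fun y : ℝ => Real.cos (2*y) :=
      Real.continuous_cos.comp (continuous_const.mul continuous_id)
    exact isOpen_ne.preimage this
  intro n hn
  induction n, hn using Nat.le_induction with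
  | base =>
    intro x hx
    rw [Function.iterate_one, (hasDerivAt_T' hx).deriv]
    norm_num [ha1]
  | succ n hn ih =>
    intro x hx
    -- extended-sum form of the n-th derivative formula
    have hext : ∀ y : ℝ,
        2 ^ (n + 1) * ∑ k ∈ Finset.range ((n - 1) / 2 + 1),
          a n k * ((Real.cos (2 * y))⁻¹) ^ (2 * k + 2) *
            (2 * Real.tan (2 * y)) ^ (n - 1 - 2 * k)
        = 2 ^ (n + 1) * ∑ k ∈ Finset.range (n + 1),
          a n k * ((Real.cos (2 * y))⁻¹) ^ (2 * k + 2) *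
            (2 * Real.tan (2 * y)) ^ (n - 1 - 2 * k) := by
      intro y
      congr 1
      apply Finset.sum_subset
      · intro k hk
        simp only [Finset.mem_range] at *
        omega
      · intro k hk1 hk2
        simp only [Finset.mem_range] at *
        rw [hvan n hn k (Or.inr (by push_cast; omega))]
        ring
    -- the n-th derivative agrees with the extended sum near x
    have hev : deriv^[n] (fun x : ℝ => 2 * Real.tan (2 * x)) =ᶠ[nhds x]
        (fun y => 2 ^ (n + 1) * ∑ k ∈ Finset.range (n + 1),
          a n k * ((Real.cos (2 * y))⁻¹) ^ (2 * k + 2) *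
            (2 * Real.tan (2 * y)) ^ (n - 1 - 2 * k)) := by
      filter_upwards [hopen.mem_nhds hx] with y hy
      rw [ih y hy, hext y]
    rw [Function.iterate_succ_apply', hev.deriv_eq]
    -- derivative of each summand
    set s : ℝ := (Real.cos (2*x))⁻¹ with hs
    set T : ℝ := 2*Real.tan (2*x) with hT
    have hterm : ∀ k ∈ Finset.range (n+1), HasDerivAt
        (fun y : ℝ => a n k * ((Real.cos (2 * y))⁻¹) ^ (2 * k + 2) *
            (2 * Real.tan (2 * y)) ^ (n - 1 - 2 * k))
        (a n k * (((2*k+2 : ℕ) : ℝ) * s^(2*k+1) * (s*T)) * T^(n-1-2*k)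
          + a n k * s^(2*k+2) * (((n-1-2*k : ℕ) : ℝ) * T^(n-1-2*k-1) * (4*s^2))) x := by
      intro k _
      have h := (((hasDerivAt_const x (a n (k:ℤ))).mul
          ((hasDerivAt_S' hx).pow (2*k+2))).mul ((hasDerivAt_T' hx).pow (n-1-2*k)))
      refine h.congr_deriv ?_
      have e1 : 2*k+2-1 = 2*k+1 := by omega
      rw [e1]
      simp only [Pi.mul_apply, Pi.pow_apply]
      ring
    have hD := ((HasDerivAt.fun_sum hterm).const_mul ((2:ℝ)^(n+1))).deriv
    rw [hD]
    -- now pure algebra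
    have key : ∀ k : ℕ,
        a n k * (((2*k+2 : ℕ) : ℝ) * s^(2*k+1) * (s*T)) * T^(n-1-2*k)
          + a n k * s^(2*k+2) * (((n-1-2*k : ℕ) : ℝ) * T^(n-1-2*k-1) * (4*s^2))
        = 2*((k:ℝ)+1) * a n k * s^(2*k+2) * T^(n-2*k)
          + 2*(2*((n:ℝ)+1) - 4*(((k+1:ℕ)):ℝ)) * a n (((k+1:ℕ):ℤ)-1)
              * s^(2*(k+1)+2) * T^(n-2*(k+1)) := by
      intro k
      have harg : ((k+1:ℕ):ℤ)-1 = (k:ℤ) := by push_cast; ring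
      rw [harg]
      by_cases hc : n ≤ 2*k
      · rw [hvan n hn k (Or.inr (by push_cast; omega))]
        ring
      · obtain ⟨m, hm⟩ : ∃ m, n = 2*k+1+m := ⟨n-(2*k+1), by omega⟩
        subst hm
        have e1 : 2*k+1+m-1-2*k = m := by omega
        have e2 : 2*k+1+m-2*k = m+1 := by omega
        have e4 : 2*k+1+m-2*(k+1) = m-1 := by omega
        rw [e1, e2, e4]
        push_cast
        ring
    have h1 : (∑ k ∈ Finset.range (n+1),
          (a n k * (((2*k+2 : ℕ) : ℝ) * s^(2*k+1) * (s*T)) * T^(n-1-2*k)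
          + a n k * s^(2*k+2) * (((n-1-2*k : ℕ) : ℝ) * T^(n-1-2*k-1) * (4*s^2))))
        = (∑ k ∈ Finset.range (n+1), 2*((k:ℝ)+1) * a n k * s^(2*k+2) * T^(n-2*k))
          + ∑ k ∈ Finset.range (n+1), 2*(2*((n:ℝ)+1) - 4*(((k+1:ℕ)):ℝ))
              * a n (((k+1:ℕ):ℤ)-1) * s^(2*(k+1)+2) * T^(n-2*(k+1)) := by
      rw [← Finset.sum_add_distrib]
      exact Finset.sum_congr rfl (fun k _ => key k)
    have hA : (∑ k ∈ Finset.range (n+2), 2*((k:ℝ)+1) * a n k * s^(2*k+2) * T^(n-2*k))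
        = (∑ k ∈ Finset.range (n+1), 2*((k:ℝ)+1) * a n k * s^(2*k+2) * T^(n-2*k)) := by
      rw [Finset.sum_range_succ]
      have h0 : a n ((n+1 : ℕ) : ℤ) = 0 := hvan n hn _ (Or.inr (by push_cast; omega))
      rw [h0]
      ring
    have hB : (∑ k ∈ Finset.range (n+2), 2*(2*((n:ℝ)+1) - 4*((k:ℕ):ℝ))
              * a n (((k:ℕ):ℤ)-1) * s^(2*k+2) * T^(n-2*k))
        = ∑ k ∈ Finset.range (n+1), 2*(2*((n:ℝ)+1) - 4*(((k+1:ℕ)):ℝ))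
              * a n (((k+1:ℕ):ℤ)-1) * s^(2*(k+1)+2) * T^(n-2*(k+1)) := by
      rw [Finset.sum_range_succ' (fun k : ℕ => 2*(2*((n:ℝ)+1) - 4*((k:ℕ):ℝ))
              * a n (((k:ℕ):ℤ)-1) * s^(2*k+2) * T^(n-2*k)) (n+1)]
      have h0 : a n (((0:ℕ):ℤ)-1) = 0 := hvan n hn _ (Or.inl (by norm_num))
      rw [h0]
      push_cast
      ring
    rw [h1, ← hA, ← hB, ← Finset.sum_add_distrib]
    have h2 : ∀ k ∈ Finset.range (n+2),
        (2:ℝ)^(n+1) * (2*((k:ℝ)+1) * a n k * s^(2*k+2) * T^(n-2*k)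
          + 2*(2*((n:ℝ)+1) - 4*((k:ℕ):ℝ)) * a n (((k:ℕ):ℤ)-1) * s^(2*k+2) * T^(n-2*k))
        = 2^(n+1+1) * (a (n+1) k * s^(2*k+2) * T^(n+1-1-2*k)) := by
      intro k hk
      rw [harec (n+1) (by omega) k]
      simp only [Nat.add_sub_cancel]
      push_cast
      ring
    rw [Finset.mul_sum, Finset.sum_congr rfl h2, ← Finset.mul_sum]
    congr 1
    symm
    apply Finset.sum_subset
    · intro k hk
      simp only [Finset.mem_range] at *
      omega
    · intro k hk1 hk2
      simp only [Finset.mem_range] at *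
      rw [hvan (n+1) (by omega) k (Or.inr (by push_cast; omega))]
      ring
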